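/- Let m₁, m₂, m₃ > 0 with m₁+m₂+m₃ = 1, let x > 0 satisfy p(x) = 0 where p is the Euler quintic polynomial, and let α > 0. With a₁, a₂, a₃, b₁, b₂, b₃, μ, δ defined as in the context, δ = 1 + β, where β = (m₁(3x²+3x+1) + m₃x²(x²+3x+3)) / (x² + m₂((x+1)²(x²+1) − x²)). -/

import Mathlib

/-- For the Euler central configuration, `δ = 1 + β` where `β` is the mass parameter. -/
theorem euler_delta_eq_one_add_beta (m1 m2 m3 x α : ℝ)
    (hm1 : 0 < m1) (hm2 : 0 < m2) (hm3 : 0 < m3)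
    (hsum : m1 + m2 + m3 = 1) (hx : 0 < x) (hα : 0 < α)
    (hp : (m3 + m2) * x ^ 5 + (3 * m3 + 2 * m2) * x ^ 4 + (3 * m3 + m2) * x ^ 3
        - (3 * m1 + m2) * x ^ 2 - (3 * m1 + 2 * m2) * x - (m1 + m2) = 0)
    (a1 a2 a3 b1 b2 b3 μ δ : ℝ)
    (ha1 : a1 = -(m3 + (1 - m1) * x) * α)
    (ha2 : a2 = (m1 * x - m3) * α)
    (ha3 : a3 = ((1 - m3) + m1 * x) * α)
    (hb1 : b1 = Real.sqrt (m1 * m2 * m3) / m1 * α)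
    (hb2 : b2 = -(Real.sqrt (m1 * m2 * m3) / m2) * (1 + x) * α)
    (hb3 : b3 = Real.sqrt (m1 * m2 * m3) / m3 * x * α)
    (hμ : μ = m1 * m2 / |a1 - a2| + m1 * m3 / |a1 - a3| + m2 * m3 / |a2 - a3|)
    (hδ : δ = (m1 * m2 * (b1 - b2) ^ 2 / |a1 - a2| ^ 3
        + m1 * m3 * (b1 - b3) ^ 2 / |a1 - a3| ^ 3
        + m2 * m3 * (b2 - b3) ^ 2 / |a2 - a3| ^ 3) / μ) :
    δ = 1 + (m1 * (3 * x ^ 2 + 3 * x + 1) + m3 * x ^ 2 * (x ^ 2 + 3 * x + 3))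
        / (x ^ 2 + m2 * ((x + 1) ^ 2 * (x ^ 2 + 1) - x ^ 2)) := by
  have hx1 : (0:ℝ) < 1 + x := by linarith
  have hP : (0:ℝ) < m1 * m2 * m3 := by positivity
  have hs2 : Real.sqrt (m1 * m2 * m3) ^ 2 = m1 * m2 * m3 := Real.sq_sqrt hP.le
  have h12 : |a1 - a2| = x * α := by
    rw [ha1, ha2, show -(m3 + (1 - m1) * x) * α - (m1 * x - m3) * α = -(x * α) by ring,
      abs_neg, abs_of_pos (by positivity)]
  have h13 : |a1 - a3| = (1 + x) * α := by
    rw [ha1, ha3, show -(m3 + (1 - m1) * x) * α - ((1 - m3) + m1 * x) * α = -((1 + x) * α) by ring,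
      abs_neg, abs_of_pos (by positivity)]
  have h23 : |a2 - a3| = α := by
    rw [ha2, ha3, show (m1 * x - m3) * α - ((1 - m3) + m1 * x) * α = -α by ring,
      abs_neg, abs_of_pos hα]
  have sq12 : (b1 - b2) ^ 2 = m1 * m2 * m3 * ((1 / m1 + (1 + x) / m2) * α) ^ 2 := by
    rw [hb1, hb2]; linear_combination ((1 / m1 + (1 + x) / m2) * α) ^ 2 * hs2
  have sq13 : (b1 - b3) ^ 2 = m1 * m2 * m3 * ((1 / m1 - x / m3) * α) ^ 2 := by
    rw [hb1, hb3]; linear_combination ((1 / m1 - x / m3) * α) ^ 2 * hs2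
  have sq23 : (b2 - b3) ^ 2 = m1 * m2 * m3 * (((1 + x) / m2 + x / m3) * α) ^ 2 := by
    rw [hb2, hb3]; linear_combination (((1 + x) / m2 + x / m3) * α) ^ 2 * hs2
  set T : ℝ := m1 * m2 * (1 + x) + m1 * m3 * x + m2 * m3 * (x * (1 + x)) with hT
  have hTpos : 0 < T := by positivity
  set S : ℝ := m3 * (1 + x) ^ 3 * (m2 + (1 + x) * m1) ^ 2 + m2 * x ^ 3 * (m3 - x * m1) ^ 2
      + m1 * x ^ 3 * (1 + x) ^ 3 * ((1 + x) * m3 + x * m2) ^ 2 with hS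
  have hμ2 : μ = T / (x * (1 + x) * α) := by
    rw [hμ, h12, h13, h23, hT]
    field_simp
  have hδval : δ = S / (x ^ 2 * (1 + x) ^ 2 * T) := by
    have hTne : m1 * m2 * (1 + x) + m1 * m3 * x + m2 * m3 * (x * (1 + x)) ≠ 0 := by positivity
    have hm1' := hm1.ne'
    have hm2' := hm2.ne'
    have hm3' := hm3.ne'
    have hx' := hx.ne'
    have hα' := hα.ne'
    have hx1' := hx1.ne'
    rw [hδ, hμ2, sq12, sq13, sq23, h12, h13, h23, hS, hT]
    field_simp
  set D : ℝ := x ^ 2 + m2 * ((x + 1) ^ 2 * (x ^ 2 + 1) - x ^ 2) with hD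
  have hDpos : 0 < D := by
    have : D = x ^ 2 + m2 * (x ^ 4 + 2 * x ^ 3 + x ^ 2 + 2 * x + 1) := by rw [hD]; ring
    rw [this]; positivity
  set Nb : ℝ := m1 * (3 * x ^ 2 + 3 * x + 1) + m3 * x ^ 2 * (x ^ 2 + 3 * x + 3) with hNb
  have h1 : 1 + Nb / D = (D + Nb) / D := by field_simp
  rw [hδval, h1, div_eq_div_iff (by positivity) hDpos.ne']
  have hm2' : m2 = 1 - m1 - m3 := by linarith
  rw [hS, hD, hNb, hT]
  rw [hm2'] at hp ⊢
  linear_combination ((-1)*m3 + (-3)*m3*x + (-4)*m3*x^2 + (-4)*m3*x^3 + (-3)*m3*x^4 + (-1)*m3*x^5 + (2)*m3^2 + (6)*m3^2*x + (7)*m3^2*x^2 + (4)*m3^2*x^3 + (3)*m3^2*x^4 + m3^2*x^5 + (-1)*m3^3 + (-3)*m3^3*x + (-3)*m3^3*x^2 + m1*x^2 + (3)*m1*x^3 + (4)*m1*x^4 + (4)*m1*x^5 + (3)*m1*x^6 + m1*x^7 + m1*m3 + (2)*m1*m3*x + (-1)*m1*m3*x^2 + (-3)*m1*m3*x^3 +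 (3)*m1*m3*x^4 + m1*m3*x^5 + (-2)*m1*m3*x^6 + (-1)*m1*m3*x^7 + (-1)*m1*m3^2 + (-2)*m1*m3^2*x + (3)*m1*m3^2*x^3 + (-3)*m1*m3^2*x^4 + (-3)*m1*m3^2*x^5 + (-1)*m1*m3^2*x^6 + (-1)*m1^2*x^2 + (-3)*m1^2*x^3 + (-4)*m1^2*x^4 + (-7)*m1^2*x^5 + (-6)*m1^2*x^6 + (-2)*m1^2*x^7 + m1^2*m3*x + (3)*m1^2*m3*x^2 + (3)*m1^2*m3*x^3 + (-3)*m1^2*m3*x^4 + (2)*m1^2*m3*x^6 + m1^2*m3*x^7 + (3)*m1^3*x^5 + (3)*m1^3*x^6 + m1^3*x^7) * hp
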